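/- arXiv:2601.18590 — 3 statements merged into one kernel-verified Lean document; each statement's English description precedes it below -/
import Mathlib

section
/- Let q be a prime power and h ≥ 1 an integer. Let u = (a_1,…,a_h | b_1,…,b_h) ∈ 𝔽_q^{2h} be a vector with (a_i, b_i) ≠ (0,0) for every i ∈ {1,…,h}. Then the number of vectors v = (x_1,…,x_h | y_1,…,y_h) ∈ 𝔽_q^{2h} satisfying (x_i, y_i) ≠ (0,0) for every i ∈ {1,…,h} and ∑_{i=1}^{h} (a_i y_i − b_i x_i) = 0 equals ∑_{j=0}^{h−1} (−1)^j C(h,j) q^{2h−1−2j} + (−1)^h. -/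
open Finset
open scoped Classical

/-- The symplectic inner product on `F^{2h}`, for vectors written as `Fin h → F × F`:
`⟨(a|b),(x|y)⟩_S = ∑_i (a_i y_i - b_i x_i)`. -/
def sympInner {F : Type} [Field F] {h : ℕ} (u v : Fin h → F × F) : F :=
  ∑ i, ((u i).1 * (v i).2 - (u i).2 * (v i).1)

variable {F : Type} [Field F] [Fintype F] [DecidableEq F]

lemma fiber_card (a b : F) (hab : ¬(a = 0 ∧ b = 0)) (c : F) :
    (univ.filter fun p : F × F => a * p.2 - b * p.1 = c).card = Fintype.card F := by
  rw [← Finset.card_univ]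
  rcases em (a = 0) with ha | ha
  · have hb : b ≠ 0 := fun hb => hab ⟨ha, hb⟩
    subst ha
    refine Finset.card_nbij' (fun p => p.2) (fun y : F => (-c/b, y)) ?_ ?_ ?_ ?_
    · intro p hp; simp
    · intro y _; simp only [mem_coe, mem_filter, mem_univ, true_and]; field_simp; ring
    · intro p hp
      simp only [mem_coe, mem_filter, mem_univ, true_and, zero_mul, zero_sub] at hp
      have : p.1 = -c/b := by field_simp; linear_combination -hp
      ext <;> simp [this]
    · intro y _; rfl
  · refine Finset.card_nbij' (fun p => p.1) (fun x : F => (x, (c + b*x)/a)) ?_ ?_ ?_ ?_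
    · intro p hp; simp
    · intro x _; simp only [mem_coe, mem_filter, mem_univ, true_and]; field_simp; ring
    · intro p hp
      simp only [mem_coe, mem_filter, mem_univ, true_and] at hp
      have : p.2 = (c + b*p.1)/a := by field_simp; linear_combination hp
      ext <;> simp [this]
    · intro x _; rfl

lemma pair_card (a b : F) (hab : ¬(a = 0 ∧ b = 0)) (c : F) :
    (univ.filter fun p : F × F => p ≠ 0 ∧ a * p.2 - b * p.1 = c).card =
      if c = 0 then Fintype.card F - 1 else Fintype.card F := by
  have key : (univ.filter fun p : F × F => p ≠ 0 ∧ a * p.2 - b * p.1 = c) =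
      (univ.filter fun p : F × F => a * p.2 - b * p.1 = c).erase 0 := by
    ext p
    simp only [mem_filter, mem_univ, true_and, mem_erase]
  rw [key]
  rcases em (c = 0) with hc | hc
  · subst hc
    rw [Finset.card_erase_of_mem (by simp), fiber_card a b hab, if_pos rfl]
  · rw [Finset.erase_eq_of_notMem (by simp [Ne.symm hc]), fiber_card a b hab, if_neg hc]

lemma nonzero_card :
    (univ.filter fun p : F × F => p ≠ 0).card = Fintype.card F ^ 2 - 1 := by
  have : (univ.filter fun p : F × F => p ≠ 0) = univ.erase 0 := by
    ext p; simp
  rw [this, Finset.card_erase_of_mem (mem_univ _), card_univ, Fintype.card_prod, sq]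

def ABpair (q : ℕ) : ℕ → ℤ × ℤ
  | 0 => (1, 0)
  | n + 1 =>
    (((q : ℤ) - 1) * (ABpair q n).1 + ((q : ℤ) * ((q : ℤ) - 1)) * (ABpair q n).2,
      (q : ℤ) * (ABpair q n).1 + ((q : ℤ) ^ 2 - (q : ℤ) - 1) * (ABpair q n).2)

lemma AB_tot (q : ℕ) : ∀ n, (ABpair q n).1 + ((q:ℤ) - 1) * (ABpair q n).2
    = ((q:ℤ)^2 - 1)^n := by
  intro n
  induction n with
  | zero => simp [ABpair]
  | succ n ih =>
    show (((q : ℤ) - 1) * (ABpair q n).1 + ((q : ℤ) * ((q : ℤ) - 1)) * (ABpair q n).2)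
      + ((q:ℤ) - 1) * ((q : ℤ) * (ABpair q n).1 + ((q : ℤ) ^ 2 - (q : ℤ) - 1) * (ABpair q n).2)
      = ((q:ℤ)^2 - 1)^(n+1)
    rw [pow_succ ((q:ℤ)^2 - 1) n, ← ih]
    ring

lemma AB_rec (q : ℕ) (n : ℕ) :
    (ABpair q (n+1)).1 = (q:ℤ) * ((q:ℤ)^2 - 1)^n - (ABpair q n).1 := by
  rw [← AB_tot q n]
  show (((q : ℤ) - 1) * (ABpair q n).1 + ((q : ℤ) * ((q : ℤ) - 1)) * (ABpair q n).2) = _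
  ring

lemma K1 (q : ℕ) (n : ℕ) :
    ∑ j ∈ Finset.range (n+1), (-1)^j * (n.choose j : ℤ) * (q:ℤ)^(2*n+1-2*j)
      = (q:ℤ) * ((q:ℤ)^2 - 1)^n := by
  rw [← Finset.sum_range_reflect]
  have h : ((q:ℤ)^2 - 1) = ((q:ℤ)^2 + (-1)) := by ring
  rw [h, add_pow, Finset.mul_sum]
  refine Finset.sum_congr rfl ?_
  intro j hj
  have hj' : j ≤ n := Nat.lt_succ_iff.mp (Finset.mem_range.mp hj)
  have h1 : n + 1 - 1 - j = n - j := by omega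
  have h2 : 2*n+1-2*(n-j) = 2*j+1 := by omega
  have h3 : n.choose (n - j) = n.choose j := Nat.choose_symm hj'
  rw [h1, h2, h3]
  have h4 : ((q:ℤ)^2)^j = (q:ℤ)^(2*j) := by rw [← pow_mul]
  rw [h4, pow_succ]
  ring

lemma closed_form (q : ℕ) : ∀ n : ℕ,
    (ABpair q n).1 = (∑ j ∈ Finset.range n, (-1)^j * (n.choose j : ℤ) * (q:ℤ)^(2*n-1-2*j))
      + (-1)^n := by
  intro n
  induction n with
  | zero => simp [ABpair]
  | succ n ih =>
    rw [AB_rec, ih, ← K1 q n]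
    have key : ∑ j ∈ Finset.range (n+1), (-1)^j * ((n+1).choose j : ℤ) * (q:ℤ)^(2*(n+1)-1-2*j)
        = (∑ j ∈ Finset.range (n+1), (-1)^j * (n.choose j : ℤ) * (q:ℤ)^(2*n+1-2*j))
          - ∑ j ∈ Finset.range n, (-1)^j * (n.choose j : ℤ) * (q:ℤ)^(2*n-1-2*j) := by
      rw [Finset.sum_range_succ' (fun j => (-1)^j * ((n+1).choose j : ℤ) * (q:ℤ)^(2*(n+1)-1-2*j)) n,
        Finset.sum_range_succ' (fun j => (-1)^j * (n.choose j : ℤ) * (q:ℤ)^(2*n+1-2*j)) n]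
    
      have e0 : 2*(n+1)-1-2*0 = 2*n+1-2*0 := by omega
      rw [eq_sub_iff_add_eq, add_right_comm, ← Finset.sum_add_distrib]
      congr 1
      · refine Finset.sum_congr rfl ?_
        intro j hj
        have hj' : j < n := Finset.mem_range.mp hj
        have e1 : 2*(n+1)-1-2*(j+1) = 2*n-1-2*j := by omega
        have e2 : 2*n+1-2*(j+1) = 2*n-1-2*j := by omega
        rw [e1, e2, Nat.choose_succ_succ (n) (j)]
        push_cast
        ring
      · simp only [e0]
        norm_num
    rw [key]
    ring

lemma main_count (q : ℕ) (hF : Fintype.card F = q) :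
    ∀ (h : ℕ) (u : Fin h → F × F), (∀ i, u i ≠ 0) → ∀ c : F,
      ((univ.filter fun v : Fin h → F × F =>
          (∀ i, v i ≠ 0) ∧ sympInner u v = c).card : ℤ)
        = if c = 0 then (ABpair q h).1 else (ABpair q h).2 := by
  intro h
  induction h with
  | zero =>
    intro u hu c
    rcases em (c = 0) with hc | hc
    · subst hc
      simp [ABpair, sympInner, Finset.filter_true_of_mem, Fintype.card_fun]
    · rw [if_neg hc]
      have : (univ.filter fun v : Fin 0 → F × F =>
          (∀ i, v i ≠ 0) ∧ sympInner u v = c) = ∅ := by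
        ext v
        simp only [mem_filter, mem_univ, true_and, Finset.notMem_empty, iff_false]
        rintro ⟨-, hs⟩
        exact hc (hs ▸ by simp [sympInner])
      rw [this]
      simp [ABpair]
  | succ n ih =>
    intro u hu c
    have hq1 : 2 ≤ q := hF ▸ Fintype.one_lt_card
    set f : F × F → F := fun p => (u 0).1 * p.2 - (u 0).2 * p.1 with hf
    have hu0 : ¬((u 0).1 = 0 ∧ (u 0).2 = 0) := by
      rintro ⟨h1, h2⟩
      exact hu 0 (Prod.ext h1 h2)
    set u' : Fin n → F × F := fun i => u i.succ with hu'def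
    have hu' : ∀ i, u' i ≠ 0 := fun i => hu i.succ
    set A : ℤ := (ABpair q n).1 with hA
    set B : ℤ := (ABpair q n).2 with hB
    clear_value A B
    have step1 : ((univ.filter fun v : Fin (n+1) → F × F =>
          (∀ i, v i ≠ 0) ∧ sympInner u v = c).card : ℤ)
        = ∑ p : F × F, ∑ w : Fin n → F × F,
            if (p ≠ 0 ∧ (∀ i, w i ≠ 0)) ∧ f p + sympInner u' w = c then (1:ℤ) else 0 := by
      rw [Finset.card_filter]
      push_cast
      refine Eq.trans (Fintype.sum_equiv (Fin.consEquiv (fun _ : Fin (n+1) => F × F)).symm _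
        (fun pw => if (pw.1 ≠ 0 ∧ (∀ i, pw.2 i ≠ 0)) ∧ f pw.1 + sympInner u' pw.2 = c
          then (1:ℤ) else 0) ?_) (Fintype.sum_prod_type _)
      intro v
      have h1 : (∀ i, v i ≠ 0) ↔ v 0 ≠ 0 ∧ ∀ i : Fin n, v i.succ ≠ 0 := by
        constructor
        · exact fun h => ⟨h 0, fun i => h i.succ⟩
        · rintro ⟨h0, hs⟩ i
          rcases Fin.eq_zero_or_eq_succ i with rfl | ⟨j, rfl⟩
          · exact h0
          · exact hs j
      have h2 : sympInner u v = f (v 0) + sympInner u' (fun i => v i.succ) := by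
        simp only [sympInner, Fin.sum_univ_succ, hu'def, hf]
      refine if_congr ?_ rfl rfl
      rw [h1, h2]
      rfl
    rw [step1]
    have inner : ∀ p : F × F, (∑ w : Fin n → F × F,
        if (p ≠ 0 ∧ (∀ i, w i ≠ 0)) ∧ f p + sympInner u' w = c then (1:ℤ) else 0)
        = if p ≠ 0 then (if f p = c then A else B) else 0 := by
      intro p
      rcases em (p = 0) with hp | hp
      · simp [hp]
      · rw [if_pos hp]
        have hcong : ∀ w : Fin n → F × F,
            ((p ≠ 0 ∧ (∀ i, w i ≠ 0)) ∧ f p + sympInner u' w = c) ↔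
            ((∀ i, w i ≠ 0) ∧ sympInner u' w = c - f p) := by
          intro w
          constructor
          · rintro ⟨⟨-, hw⟩, hs⟩
            exact ⟨hw, by linear_combination hs⟩
          · rintro ⟨hw, hs⟩
            exact ⟨⟨hp, hw⟩, by linear_combination hs⟩
        calc (∑ w : Fin n → F × F,
            if (p ≠ 0 ∧ (∀ i, w i ≠ 0)) ∧ f p + sympInner u' w = c then (1:ℤ) else 0)
            = ∑ w : Fin n → F × F,
              if (∀ i, w i ≠ 0) ∧ sympInner u' w = c - f p then (1:ℤ) else 0 :=
              Finset.sum_congr rfl fun w _ => if_congr (hcong w) rfl rfl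
          _ = ((univ.filter fun w : Fin n → F × F =>
                (∀ i, w i ≠ 0) ∧ sympInner u' w = c - f p).card : ℤ) := by
              rw [Finset.card_filter]; push_cast; rfl
          _ = if c - f p = 0 then A else B := ih u' hu' (c - f p)
          _ = if f p = c then A else B := by
              have hiff : (c - f p = 0) ↔ (f p = c) := by
                rw [sub_eq_zero]
                exact ⟨fun h => h.symm, fun h => h.symm⟩
              rw [if_congr hiff rfl rfl]
    rw [Finset.sum_congr rfl fun p _ => inner p]
    have split : ∀ p : F × F, (if p ≠ 0 then (if f p = c then A else B) else 0)
        = (if p ≠ 0 ∧ f p = c then A else 0) + (if p ≠ 0 ∧ ¬(f p = c) then B else 0) := by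
      intro p
      by_cases hp : p = 0 <;> by_cases hfc : f p = c <;> simp [hp, hfc]
    rw [Finset.sum_congr rfl fun p _ => split p, Finset.sum_add_distrib,
      ← Finset.sum_filter, ← Finset.sum_filter, Finset.sum_const, Finset.sum_const,
      nsmul_eq_mul, nsmul_eq_mul]
    have hcA : (univ.filter fun p : F × F => p ≠ 0 ∧ f p = c).card =
        if c = 0 then q - 1 else q := by
      rw [hf]
      rw [pair_card (u 0).1 (u 0).2 hu0 c, hF]
    have hsum : (univ.filter fun p : F × F => p ≠ 0 ∧ f p = c).card +
        (univ.filter fun p : F × F => p ≠ 0 ∧ ¬(f p = c)).card = q ^ 2 - 1 := by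
      rw [← Finset.filter_filter, ← Finset.filter_filter,
        Finset.card_filter_add_card_filter_not, nonzero_card, hF]
    clear_value f u'
    clear step1 inner split ih
    have hq2 : 1 ≤ q ^ 2 := Nat.one_le_pow _ _ (by omega)
    set kA := (univ.filter fun p : F × F => p ≠ 0 ∧ f p = c).card with hkA
    set kB := (univ.filter fun p : F × F => p ≠ 0 ∧ ¬(f p = c)).card with hkB
    clear_value kA kB
    clear hkA hkB
    rcases em (c = 0) with hc | hc
    · subst hc
      rw [if_pos rfl] at hcA
      have hcB : kB = q ^ 2 - q := by omega
      rw [hcA, hcB, if_pos rfl]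
      have e1 : ((q - 1 : ℕ) : ℤ) = (q : ℤ) - 1 := by
        rw [Nat.cast_sub (by omega)]; push_cast; ring
      have e2 : ((q ^ 2 - q : ℕ) : ℤ) = (q : ℤ) ^ 2 - q := by
        rw [Nat.cast_sub (by nlinarith)]; push_cast; ring
      rw [e1, e2]
      show _ = (ABpair q (n+1)).1
      simp only [ABpair, ← hA, ← hB]
      ring
    · rw [if_neg hc] at hcA
      have hq2q : q + 1 ≤ q ^ 2 := by nlinarith
      have hcB : kB = q ^ 2 - 1 - q := by omega
      rw [hcA, hcB, if_neg hc]
      have e2 : ((q ^ 2 - 1 - q : ℕ) : ℤ) = (q : ℤ) ^ 2 - 1 - q := by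
        have h' : q ^ 2 - 1 - q = q ^ 2 - (1 + q) := by omega
        rw [h', Nat.cast_sub (by omega)]
        push_cast
        ring
      rw [e2]
      show _ = (ABpair q (n+1)).2
      simp only [ABpair, ← hA, ← hB]
      ring

/-- Let `q` be a prime power (realized as the cardinality of a finite field
`F`) and `h ≥ 1`. If `u ∈ F^{2h}` has all of its `h` symplectic coordinate pairs nonzero, then
the number of `v ∈ F^{2h}` with all symplectic coordinate pairs nonzero satisfying
`⟨u,v⟩_S = 0` equals `∑_{j=0}^{h-1} (-1)^j C(h,j) q^{2h-1-2j} + (-1)^h`. -/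
theorem symp_full_support_orth_count
    (q : ℕ) (F : Type) [Field F] [Fintype F] [DecidableEq F] (hF : Fintype.card F = q)
    (h : ℕ) (hh : 1 ≤ h) (u : Fin h → F × F) (hu : ∀ i, u i ≠ 0) :
    (((Finset.univ : Finset (Fin h → F × F)).filter fun v =>
        (∀ i, v i ≠ 0) ∧ sympInner u v = 0).card : ℤ) =
      (∑ j ∈ Finset.range h, (-1) ^ j * (h.choose j : ℤ) * (q : ℤ) ^ (2 * h - 1 - 2 * j)) +
        (-1) ^ h := by
  have := main_count q hF h u hu 0
  rw [if_pos rfl, closed_form] at this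
  exact this
end

section
/- For every odd positive integer t and every real number b with 0 < b ≤ (t+1)/e², it holds that ∑_{i=0}^{t} (−b)^i / i! ≥ e^{−b} − b^{t+1}/(t+1)!, and moreover e^{−b} − b^{t+1}/(t+1)! > 0; in particular ∑_{i=0}^{t} (−b)^i / i! > 0. -/
open Finset

/-- Derivative of the truncated exponential series at `-x`. -/
lemma truncExp_hasDerivAt (n : ℕ) (x : ℝ) :
    HasDerivAt (fun y : ℝ => ∑ i ∈ Finset.range (n + 1), (-y) ^ i / (Nat.factorial i : ℝ))
      (-∑ i ∈ Finset.range n, (-x) ^ i / (Nat.factorial i : ℝ)) x := by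
  have h : ∀ i ∈ Finset.range (n + 1),
      HasDerivAt (fun y : ℝ => (-y) ^ i / (Nat.factorial i : ℝ))
        ((i : ℝ) * (-x) ^ (i - 1) * (-1) / (Nat.factorial i : ℝ)) x := by
    intro i _
    have h1 : HasDerivAt (fun y : ℝ => (-y) ^ i) ((i : ℝ) * (-x) ^ (i - 1) * (-1)) x := by
      have := (hasDerivAt_pow i (-x)).comp x (hasDerivAt_neg x)
      simpa [Function.comp_def] using this
    exact h1.div_const _
  have hsum := HasDerivAt.fun_sum h
  convert hsum using 1
  case e'_4 => rfl
  case e'_5 => rfl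
  rw [Finset.sum_range_succ']
  simp only [Nat.cast_zero, zero_mul, zero_div, add_zero, Nat.add_sub_cancel]
  rw [← Finset.sum_neg_distrib]
  apply Finset.sum_congr rfl
  intro i _
  have hfs : (Nat.factorial (i + 1) : ℝ) = ((i : ℝ) + 1) * Nat.factorial i := by
    rw [Nat.factorial_succ]; push_cast; ring
  rw [hfs]
  have hfac : (Nat.factorial i : ℝ) ≠ 0 := Nat.cast_ne_zero.2 (Nat.factorial_ne_zero i)
  push_cast
  field_simp

/-- Alternating sign of the remainder of the exponential series. -/
lemma truncExp_sign (n : ℕ) : ∀ x : ℝ, 0 ≤ x →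
    0 ≤ (-1 : ℝ) ^ n *
      (∑ i ∈ Finset.range (n + 1), (-x) ^ i / (Nat.factorial i : ℝ) - Real.exp (-x)) := by
  induction n with
  | zero =>
    intro x hx
    have h1 : Real.exp (-x) ≤ 1 := by
      rw [← Real.exp_zero]
      exact Real.exp_le_exp.2 (by linarith)
    simpa using h1
  | succ n ih =>
    intro x hx
    set f : ℝ → ℝ := fun y => (-1 : ℝ) ^ (n + 1) *
      (∑ i ∈ Finset.range (n + 2), (-y) ^ i / (Nat.factorial i : ℝ) - Real.exp (-y)) with hf
    have hderiv : ∀ y : ℝ, HasDerivAt f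
        ((-1 : ℝ) ^ n *
          (∑ i ∈ Finset.range (n + 1), (-y) ^ i / (Nat.factorial i : ℝ) - Real.exp (-y))) y := by
      intro y
      have h1 := truncExp_hasDerivAt (n + 1) y
      have h2 : HasDerivAt (fun y : ℝ => Real.exp (-y)) (-Real.exp (-y)) y := by
        have := (Real.hasDerivAt_exp (-y)).comp y (hasDerivAt_neg y)
        simpa [Function.comp_def] using this
      have h3 := (h1.sub h2).const_mul ((-1 : ℝ) ^ (n + 1))
      convert h3 using 1
      case e'_4 => rfl
      case e'_5 => rfl
      case e'_8 => rfl
      rw [pow_succ]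
      ring
    have hmono : MonotoneOn f (Set.Ici (0 : ℝ)) := by
      apply monotoneOn_of_deriv_nonneg (convex_Ici 0)
      · exact fun y _ => (hderiv y).continuousAt.continuousWithinAt
      · exact fun y _ => (hderiv y).differentiableAt.differentiableWithinAt
      · intro y hy
        rw [(hderiv y).deriv]
        exact ih y (le_of_lt (by simpa using hy))
    have h0 : f 0 = 0 := by
      simp only [hf]
      have : ∑ i ∈ Finset.range (n + 2), (-(0 : ℝ)) ^ i / (Nat.factorial i : ℝ) = 1 := by
        rw [Finset.sum_eq_single 0]
        · simp
        · intro i _ hi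
          simp [zero_pow hi]
        · simp
      rw [this, neg_zero, Real.exp_zero]
      ring
    have := hmono (Set.self_mem_Ici) (Set.mem_Ici.2 hx) hx
    rw [h0] at this
    exact this

/-- `n^n ≤ e^n * n!`. -/
lemma pow_le_exp_pow_mul_factorial (n : ℕ) :
    (n : ℝ) ^ n ≤ Real.exp 1 ^ n * (Nat.factorial n : ℝ) := by
  induction n with
  | zero => simp
  | succ n ih =>
    have hkey : ((n : ℝ) + 1) ^ n ≤ Real.exp 1 * (n : ℝ) ^ n := by
      rcases Nat.eq_zero_or_pos n with h | h
      · subst h; simpa using Real.one_le_exp (by norm_num)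
      · have hn : (0 : ℝ) < n := by exact_mod_cast h
        have h1 : (n : ℝ) + 1 ≤ Real.exp (1 / n) * n := by
          have := Real.add_one_le_exp (1 / (n : ℝ))
          calc (n : ℝ) + 1 = (1 / n + 1) * n := by field_simp; ring
            _ ≤ Real.exp (1 / n) * n := by
                apply mul_le_mul_of_nonneg_right this (le_of_lt hn)
        calc ((n : ℝ) + 1) ^ n ≤ (Real.exp (1 / n) * n) ^ n := by
              apply pow_le_pow_left₀ (by positivity) h1
          _ = Real.exp (1 / n) ^ n * (n : ℝ) ^ n := mul_pow _ _ _
          _ = Real.exp 1 * (n : ℝ) ^ n := by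
              rw [← Real.exp_nat_mul]
              congr 1
              field_simp
    have hpos : (0 : ℝ) ≤ (n : ℝ) + 1 := by positivity
    push_cast [Nat.factorial_succ]
    calc ((n : ℝ) + 1) ^ (n + 1) = ((n : ℝ) + 1) * ((n : ℝ) + 1) ^ n := by ring
      _ ≤ ((n : ℝ) + 1) * (Real.exp 1 * (n : ℝ) ^ n) := by
          apply mul_le_mul_of_nonneg_left hkey hpos
      _ ≤ ((n : ℝ) + 1) * (Real.exp 1 * (Real.exp 1 ^ n * (Nat.factorial n : ℝ))) := by
          apply mul_le_mul_of_nonneg_left _ hpos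
          apply mul_le_mul_of_nonneg_left ih (le_of_lt (Real.exp_pos 1))
      _ = Real.exp 1 ^ (n + 1) * (((n : ℝ) + 1) * (Nat.factorial n : ℝ)) := by ring

/-- For every odd positive integer `t` and every real `b` with
`0 < b ≤ (t+1)/e²`, one has `∑_{i=0}^{t} (-b)^i/i! ≥ e^{-b} - b^{t+1}/(t+1)!`, and
`e^{-b} - b^{t+1}/(t+1)! > 0`; in particular `∑_{i=0}^{t} (-b)^i/i! > 0`. -/
theorem truncated_exp_alternating_pos
    (t : ℕ) (ht : Odd t) (b : ℝ) (hb0 : 0 < b)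
    (hb : b ≤ ((t : ℝ) + 1) / Real.exp 1 ^ 2) :
    Real.exp (-b) - b ^ (t + 1) / (Nat.factorial (t + 1) : ℝ) ≤
        ∑ i ∈ Finset.range (t + 1), (-b) ^ i / (Nat.factorial i : ℝ) ∧
      0 < Real.exp (-b) - b ^ (t + 1) / (Nat.factorial (t + 1) : ℝ) ∧
      0 < ∑ i ∈ Finset.range (t + 1), (-b) ^ i / (Nat.factorial i : ℝ) := by
  have hteven : Even (t + 1) := Odd.add_one ht
  have hneg : (-b) ^ (t + 1) = b ^ (t + 1) := hteven.neg_pow b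
  have hsign : (-1 : ℝ) ^ (t + 1) = 1 := hteven.neg_one_pow
  -- Part 1
  have h1 : Real.exp (-b) - b ^ (t + 1) / (Nat.factorial (t + 1) : ℝ) ≤
      ∑ i ∈ Finset.range (t + 1), (-b) ^ i / (Nat.factorial i : ℝ) := by
    have := truncExp_sign (t + 1) b (le_of_lt hb0)
    rw [hsign, one_mul, Finset.sum_range_succ, hneg] at this
    linarith
  -- Part 2
  have h2 : 0 < Real.exp (-b) - b ^ (t + 1) / (Nat.factorial (t + 1) : ℝ) := by
    set n : ℕ := t + 1 with hn
    have hnpos : (0 : ℝ) < n := by positivity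
    have hfacpos : (0 : ℝ) < (Nat.factorial n : ℝ) := by
      exact_mod_cast Nat.factorial_pos n
    have he : (1 : ℝ) < Real.exp 1 ^ 2 := by
      nlinarith [Real.exp_one_gt_d9]
    have hblt : b < (n : ℝ) := by
      calc b ≤ (n : ℝ) / Real.exp 1 ^ 2 := by push_cast [hn]; exact_mod_cast hb
        _ < n := by
            rw [div_lt_iff₀ (by positivity)]
            nlinarith
    -- b^n ≤ (n/e²)^n ≤ n! * e^(-n) < n! * e^(-b)
    have hb_pow : b ^ n ≤ ((n : ℝ) / Real.exp 1 ^ 2) ^ n := by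
      apply pow_le_pow_left₀ (le_of_lt hb0)
      push_cast [hn]; exact_mod_cast hb
    have hfac := pow_le_exp_pow_mul_factorial n
    have hexp_pos : (0 : ℝ) < Real.exp 1 ^ n := by positivity
    have hstep : ((n : ℝ) / Real.exp 1 ^ 2) ^ n ≤ (Nat.factorial n : ℝ) * Real.exp (-(n : ℝ)) := by
      rw [div_pow]
      rw [div_le_iff₀ (by positivity)]
      have : Real.exp (-(n : ℝ)) * (Real.exp 1 ^ 2) ^ n = Real.exp 1 ^ n := by
        rw [← pow_mul, ← Real.exp_nat_mul, ← Real.exp_nat_mul, ← Real.exp_add]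
        congr 1
        push_cast
        ring
      rw [mul_assoc, this]
      calc (n : ℝ) ^ n ≤ Real.exp 1 ^ n * (Nat.factorial n : ℝ) := hfac
        _ = (Nat.factorial n : ℝ) * Real.exp 1 ^ n := by ring
    have hexp_lt : Real.exp (-(n : ℝ)) < Real.exp (-b) := Real.exp_lt_exp.2 (by linarith)
    have : b ^ n < (Nat.factorial n : ℝ) * Real.exp (-b) := by
      calc b ^ n ≤ ((n : ℝ) / Real.exp 1 ^ 2) ^ n := hb_pow
        _ ≤ (Nat.factorial n : ℝ) * Real.exp (-(n : ℝ)) := hstep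
        _ < (Nat.factorial n : ℝ) * Real.exp (-b) := by
            apply mul_lt_mul_of_pos_left hexp_lt hfacpos
    have := (div_lt_iff₀ hfacpos).2 (by linarith : b ^ n < Real.exp (-b) * (Nat.factorial n : ℝ))
    linarith
  exact ⟨h1, h2, lt_of_lt_of_le h2 h1⟩
end

section
/- Let q be a prime power and let δ ∈ (0, 1 − 1/q²) be a constant. Then there exists a constant a_δ > 0 such that for all sufficiently large n the following holds with d − 1 = ⌊δn⌋ and ℓ = ⌊√n⌋: for every subset T ⊆ {1,…,n} with |T| ≥ (2δ/3)n, if u_1, …, u_ℓ are independent random vectors each distributed uniformly in B_q^S(2n, d−1), then the probability that the restricted vectors u_1|_T, …, u_ℓ|_T are linearly dependent over 𝔽_q is at most q^{−a_δ n}, where for u = (a_1,…,a_n | b_1,…,b_n) the restriction u|_T denotes the vector ((a_i)_{i∈T} | (b_i)_{i∈T}) ∈ 𝔽_q^{2|T|}. -/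
set_option maxHeartbeats 1000000

open Finset
open scoped Classical

/-- Symplectic weight of a vector in `F^{2n}`, written as `Fin n → F × F`. -/
noncomputable def sympWt {F : Type} [Zero F] [DecidableEq F] {n : ℕ} (u : Fin n → F × F) : ℕ :=
  hammingNorm u

/-- The symplectic ball `B_q^S(2n, r)` of radius `r`. -/
noncomputable def sympBall (F : Type) [Fintype F] [Zero F] [DecidableEq F] (n r : ℕ) :
    Finset (Fin n → F × F) :=
  Finset.univ.filter fun x => sympWt x ≤ r

section aux


variable {V : Type} [Fintype V] [DecidableEq V] [Zero V] {n : ℕ}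

lemma card_fixed_support (S : Finset (Fin n)) :
    ((univ : Finset (Fin n → V)).filter fun x => ∀ i, x i ≠ 0 ↔ i ∈ S).card
      = (Fintype.card V - 1) ^ S.card := by
  have hcard : Fintype.card {v : V // v ≠ 0} = Fintype.card V - 1 := by
    rw [Fintype.card_subtype_compl, Fintype.card_subtype_eq]
  have : ((univ : Finset (Fin n → V)).filter fun x => ∀ i, x i ≠ 0 ↔ i ∈ S).card
      = (univ : Finset ({i // i ∈ S} → {v : V // v ≠ 0})).card := by
    refine Finset.card_bij'
      (fun (x : Fin n → V) (hx) =>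
        (fun j : {i // i ∈ S} => (⟨x j.1, ((mem_filter.mp hx).2 j.1).mpr j.2⟩ : {v : V // v ≠ 0})))
      (fun (f : {i // i ∈ S} → {v : V // v ≠ 0}) (hf) =>
        (fun i => if h : i ∈ S then (f ⟨i, h⟩).1 else 0))
      (fun x hx => mem_univ _)
      (fun f hf => ?_) (fun x hx => ?_) (fun f hf => ?_)
    · simp only [mem_filter, mem_univ, true_and]
      intro i
      constructor
      · intro h
        by_contra hi
        simp [dif_neg hi] at h
      · intro h
        rw [dif_pos h]
        exact (f ⟨i, h⟩).2
    · funext i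
      by_cases h : i ∈ S
      · simp [dif_pos h]
      · simp only [dif_neg h]
        by_contra hne
        exact h (((mem_filter.mp hx).2 i).mp (Ne.symm hne))
    · funext j
      simp [dif_pos j.2]
  rw [this, Finset.card_univ, Fintype.card_fun, hcard, Fintype.card_coe]

lemma card_supp_wt (U : Finset (Fin n)) (s : ℕ) :
    ((univ : Finset (Fin n → V)).filter fun x => (∀ i ∉ U, x i = 0) ∧ hammingNorm x = s).card
      = U.card.choose s * (Fintype.card V - 1) ^ s := by
  rw [Finset.card_eq_sum_card_fiberwise
    (f := fun x : Fin n → V => (univ.filter fun i => x i ≠ 0))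
    (t := U.powersetCard s) ?_]
  · rw [Finset.sum_congr rfl (g := fun _ => (Fintype.card V - 1) ^ s) ?_]
    · rw [Finset.sum_const, Finset.card_powersetCard, smul_eq_mul]
    · intro S hS
      rw [Finset.mem_powersetCard] at hS
      show _ = (Fintype.card V - 1) ^ s
      rw [← hS.2, ← card_fixed_support S]
      congr 1
      ext x
      simp only [mem_filter, mem_univ, true_and]
      constructor
      · rintro ⟨⟨h0, hw⟩, hsupp⟩ i
        constructor
        · intro hxi
          rw [← hsupp]; simp [hxi]
        · intro hiS
          have : i ∈ univ.filter fun i => x i ≠ 0 := by rw [hsupp]; exact hiS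
          simpa using this
      · intro h
        have hsupp : (univ.filter fun i => x i ≠ 0) = S := by
          ext i; simpa using h i
        refine ⟨⟨fun i hi => ?_, ?_⟩, hsupp⟩
        · by_contra hxi
          exact hi (hS.1 ((h i).mp hxi))
        · rw [hammingNorm, hsupp, hS.2]
  · intro x hx
    simp only [Finset.mem_coe, mem_filter, mem_univ, true_and] at hx ⊢
    rw [Finset.mem_powersetCard]
    constructor
    · intro i hi
      simp only [mem_filter, mem_univ, true_and] at hi
      by_contra hiU
      exact hi (hx.1 i hiU)
    · rw [← hx.2, hammingNorm]

lemma ball_lower (r : ℕ) :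
    n.choose r * (Fintype.card V - 1)^r ≤
      ((univ : Finset (Fin n → V)).filter fun x => hammingNorm x ≤ r).card := by
  have h := card_supp_wt (V := V) (univ : Finset (Fin n)) r
  rw [Finset.card_univ, Fintype.card_fin] at h
  rw [← h]
  apply Finset.card_le_card
  intro x hx
  simp only [mem_filter, mem_univ, true_and] at *
  exact hx.2.le

lemma comp_upper (T : Finset (Fin n)) (r : ℕ) :
    ((univ : Finset (Fin n → V)).filter fun x => (∀ i ∈ T, x i = 0) ∧ hammingNorm x ≤ r).card
      ≤ ∑ s ∈ Finset.range (r+1), (Tᶜ.card).choose s * (Fintype.card V - 1)^s := by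
  rw [Finset.card_eq_sum_card_fiberwise (f := fun x => hammingNorm x) (t := range (r+1)) ?_]
  · apply Finset.sum_le_sum
    intro s hs
    rw [← card_supp_wt Tᶜ s]
    apply Finset.card_le_card
    intro x hx
    simp only [mem_filter, mem_univ, true_and] at *
    exact ⟨fun i hi => hx.1.1 i (by simpa using hi), hx.2⟩
  · intro x hx
    simp only [Finset.mem_coe, mem_filter, mem_univ, true_and] at hx ⊢
    simp only [Finset.mem_range]
    exact Nat.lt_succ_of_le hx.2

lemma choose_mul_pow_le (m n s : ℕ) (h : m ≤ n) : m.choose s * n^s ≤ n.choose s * m^s := by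
  have key : m.descFactorial s * n^s ≤ n.descFactorial s * m^s := by
    have e1 : n^s = ∏ _i ∈ range s, n := by simp
    have e2 : m^s = ∏ _i ∈ range s, m := by simp
    rw [Nat.descFactorial_eq_prod_range, Nat.descFactorial_eq_prod_range, e1, e2,
      ← Finset.prod_mul_distrib, ← Finset.prod_mul_distrib]
    apply Finset.prod_le_prod'
    intro i _
    calc (m - i) * n = m*n - i*n := Nat.sub_mul m i n
      _ ≤ m*n - i*m := Nat.sub_le_sub_left (Nat.mul_le_mul_left i h) (m*n)
      _ = (n - i) * m := by rw [Nat.mul_comm m n, ← Nat.sub_mul]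
  rw [Nat.descFactorial_eq_factorial_mul_choose, Nat.descFactorial_eq_factorial_mul_choose] at key
  have := Nat.factorial_pos s
  calc m.choose s * n^s = ((Nat.factorial s) * (m.choose s * n^s)) / (Nat.factorial s) := by
        rw [Nat.mul_div_cancel_left _ this]
    _ ≤ ((Nat.factorial s) * (n.choose s * m^s)) / (Nat.factorial s) := by
        apply Nat.div_le_div_right
        calc (Nat.factorial s) * (m.choose s * n^s) = (Nat.factorial s) * m.choose s * n^s := by ring
          _ ≤ (Nat.factorial s) * n.choose s * m^s := key
          _ = (Nat.factorial s) * (n.choose s * m^s) := by ring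
    _ = n.choose s * m^s := Nat.mul_div_cancel_left _ this

lemma choose_chain (n r P : ℕ) : ∀ d s, s + d = r →
    n.choose s * P^s * ((n-r)*P)^d ≤ n.choose r * P^r * r^d := by
  intro d
  induction d with
  | zero => intro s h; subst r; simp [Nat.add_zero]
  | succ d ih =>
    intro s h
    have hs1 : s + 1 + d = r := by omega
    have step : n.choose s * P^s * ((n-r)*P) ≤ n.choose (s+1) * P^(s+1) * r := by
      have h1 : n.choose s * (n - s) = n.choose (s+1) * (s+1) := (Nat.choose_succ_right_eq n s).symm
      calc n.choose s * P^s * ((n-r)*P) = (n.choose s * (P^s * P)) * (n-r) := by ring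
        _ ≤ (n.choose s * (P^s * P)) * (n-s) :=
            Nat.mul_le_mul le_rfl (Nat.sub_le_sub_left (by omega) n)
        _ = (n.choose s * (n-s)) * (P^s * P) := by ring
        _ = (n.choose (s+1) * (s+1)) * (P^s * P) := by rw [h1]
        _ = (n.choose (s+1) * (P^s * P)) * (s+1) := by ring
        _ ≤ (n.choose (s+1) * (P^s * P)) * r := Nat.mul_le_mul le_rfl (by omega)
        _ = n.choose (s+1) * P^(s+1) * r := by ring
    calc n.choose s * P^s * ((n-r)*P)^(d+1)
        = (n.choose s * P^s * ((n-r)*P)) * ((n-r)*P)^d := by ring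
      _ ≤ (n.choose (s+1) * P^(s+1) * r) * ((n-r)*P)^d := Nat.mul_le_mul step le_rfl
      _ = (n.choose (s+1) * P^(s+1) * ((n-r)*P)^d) * r := by ring
      _ ≤ (n.choose r * P^r * r^d) * r := Nat.mul_le_mul (ih (s+1) hs1) le_rfl
      _ = n.choose r * P^r * r^(d+1) := by ring

lemma dep_count {F : Type} [Field F] [Fintype F] [DecidableEq F] {n ℓ r : ℕ}
    (T : Finset (Fin n)) (g : Fin ℓ → F) (k : Fin ℓ) (hk : g k ≠ 0) :
    ((univ : Finset (Fin ℓ → Fin n → F × F)).filter fun u =>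
        (∀ j, u j ∈ sympBall F n r) ∧ ∀ i ∈ T, ∑ j, g j • u j i = 0).card
      ≤ ((univ : Finset (Fin n → F × F)).filter fun x =>
            (∀ i ∈ T, x i = 0) ∧ sympWt x ≤ r).card * (sympBall F n r).card ^ (ℓ - 1) := by
  classical
  set B := sympBall F n r with hB
  set Bc := (univ : Finset (Fin n → F × F)).filter fun x => (∀ i ∈ T, x i = 0) ∧ sympWt x ≤ r
    with hBc
  have target_card : (Fintype.piFinset fun j : Fin ℓ => if j = k then Bc else B).card
      = Bc.card * B.card ^ (ℓ - 1) := by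
    rw [Fintype.card_piFinset, ← Finset.mul_prod_erase univ _ (mem_univ k)]
    simp only [if_pos rfl]
    congr 1
    rw [Finset.prod_congr rfl (fun j hj => by rw [if_neg (Finset.ne_of_mem_erase hj)]),
      Finset.prod_const, Finset.card_erase_of_mem (mem_univ k), Finset.card_univ,
      Fintype.card_fin]
  rw [← target_card]
  apply Finset.card_le_card_of_injOn
    (f := fun u : Fin ℓ → Fin n → F × F =>
      Function.update u k (fun i => if i ∈ T then (0 : F × F) else u k i))
  · intro u hu
    simp only [Finset.mem_coe, mem_filter, mem_univ, true_and] at hu ⊢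
    rw [Fintype.mem_piFinset]
    intro j
    by_cases hj : j = k
    · subst hj
      rw [Function.update_self, if_pos rfl]
      simp only [Bc, mem_filter, mem_univ, true_and]
      refine ⟨fun i hi => if_pos hi, ?_⟩
      have hb := hu.1 j
      simp only [hB, sympBall, mem_filter, mem_univ, true_and] at hb
      refine le_trans ?_ hb
      unfold sympWt hammingNorm
      apply Finset.card_le_card
      intro i hi
      simp only [mem_filter, mem_univ, true_and] at hi ⊢
      intro h0
      apply hi
      by_cases hiT : i ∈ T
      · rw [if_pos hiT]
      · rw [if_neg hiT]; exact h0
    · rw [Function.update_of_ne hj, if_neg hj]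
      exact hu.1 j
  · intro u hu u' hu' heq
    simp only [coe_filter, Set.mem_setOf_eq, mem_univ, true_and] at hu hu'
    have hne : ∀ j, j ≠ k → u j = u' j := by
      intro j hj
      have := congr_fun heq j
      simp only [Function.update_of_ne hj] at this
      exact this
    funext j
    by_cases hj : j = k
    · subst hj
      funext i
      by_cases hiT : i ∈ T
      · have e1 : ∑ j', g j' • u j' i = 0 := hu.2 i hiT
        have e2 : ∑ j', g j' • u' j' i = 0 := hu'.2 i hiT
        rw [← Finset.add_sum_erase univ _ (mem_univ j)] at e1 e2
        have esum : ∑ j' ∈ univ.erase j, g j' • u j' i = ∑ j' ∈ univ.erase j, g j' • u' j' i :=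
          Finset.sum_congr rfl fun j' hj' => by rw [hne j' (Finset.ne_of_mem_erase hj')]
        have : g j • u j i = g j • u' j i := by
          have := e1.trans e2.symm
          rw [esum] at this
          exact add_right_cancel this
        have := congr_arg (fun v => (g j)⁻¹ • v) this
        simpa [inv_smul_smul₀ hk] using this
      · have := congr_fun (congr_fun heq j) i
        simp only [Function.update_self, if_neg hiT] at this
        exact this
    · exact hne j hj

lemma union_bound {F : Type} [Field F] [Fintype F] [DecidableEq F] {n ℓ r : ℕ}
    (T : Finset (Fin n)) :
    ((univ : Finset (Fin ℓ → Fin n → F × F)).filter fun u =>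
        (∀ j, u j ∈ sympBall F n r) ∧
          ¬ LinearIndependent F (fun j : Fin ℓ => fun i : {i // i ∈ T} => u j i.1)).card
      ≤ (Fintype.card F ^ ℓ * ℓ) *
        (((univ : Finset (Fin n → F × F)).filter fun x =>
            (∀ i ∈ T, x i = 0) ∧ sympWt x ≤ r).card * (sympBall F n r).card ^ (ℓ - 1)) := by
  classical
  set P := (univ : Finset ((Fin ℓ → F) × Fin ℓ)).filter fun p => p.1 p.2 ≠ 0 with hP
  have hsub : (univ.filter fun u : Fin ℓ → Fin n → F × F =>
        (∀ j, u j ∈ sympBall F n r) ∧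
          ¬ LinearIndependent F (fun j : Fin ℓ => fun i : {i // i ∈ T} => u j i.1))
      ⊆ P.biUnion fun p => univ.filter fun u =>
          (∀ j, u j ∈ sympBall F n r) ∧ ∀ i ∈ T, ∑ j, p.1 j • u j i = 0 := by
    intro u hu
    simp only [mem_filter, mem_univ, true_and] at hu
    obtain ⟨g, hsum, k, hk⟩ := Fintype.not_linearIndependent_iff.mp hu.2
    rw [Finset.mem_biUnion]
    refine ⟨(g, k), by simp [hP, hk], ?_⟩
    simp only [mem_filter, mem_univ, true_and]
    refine ⟨hu.1, fun i hi => ?_⟩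
    have := congr_fun hsum ⟨i, hi⟩
    simpa using this
  calc _ ≤ _ := Finset.card_le_card hsub
    _ ≤ ∑ p ∈ P, (univ.filter fun u : Fin ℓ → Fin n → F × F =>
          (∀ j, u j ∈ sympBall F n r) ∧ ∀ i ∈ T, ∑ j, p.1 j • u j i = 0).card :=
        Finset.card_biUnion_le
    _ ≤ ∑ _p ∈ P, (((univ : Finset (Fin n → F × F)).filter fun x =>
            (∀ i ∈ T, x i = 0) ∧ sympWt x ≤ r).card * (sympBall F n r).card ^ (ℓ - 1)) := by
        apply Finset.sum_le_sum
        intro p hp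
        simp only [hP, mem_filter, mem_univ, true_and] at hp
        exact dep_count T p.1 p.2 hp
    _ = P.card * (((univ : Finset (Fin n → F × F)).filter fun x =>
            (∀ i ∈ T, x i = 0) ∧ sympWt x ≤ r).card * (sympBall F n r).card ^ (ℓ - 1)) := by
        rw [Finset.sum_const, smul_eq_mul]
    _ ≤ _ := by
        apply Nat.mul_le_mul_right
        calc P.card ≤ (univ : Finset ((Fin ℓ → F) × Fin ℓ)).card :=
              Finset.card_le_card (Finset.filter_subset _ _)
          _ = Fintype.card F ^ ℓ * ℓ := by
              simp [Finset.card_univ, Fintype.card_prod, Fintype.card_fun]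

lemma term_bound (m n r s P : ℕ) (x₀ y₀ : ℝ) (hs : s ≤ r) (hrn : r < n) (hmn : m ≤ n)
    (hP : 1 ≤ P) (hx₀0 : 0 ≤ x₀) (hy₀0 : 0 ≤ y₀)
    (hm : (m:ℝ) ≤ x₀ * n) (hr : (r:ℝ) ≤ y₀ * (((n - r : ℕ):ℝ) * P)) :
    ((m.choose s * P^s : ℕ):ℝ) ≤ x₀^s * y₀^(r-s) * ((n.choose r * P^r : ℕ):ℝ) := by
  have hn0 : (0:ℝ) < n := by
    have : 0 < n := by omega
    exact_mod_cast this
  have hD0 : (0:ℝ) < ((n - r : ℕ):ℝ) * P := by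
    have h1 : 0 < n - r := by omega
    have h2 : 0 < P := by omega
    positivity
  have step1 : ((m.choose s : ℕ):ℝ) ≤ x₀^s * (n.choose s : ℕ) := by
    have h1 : ((m.choose s : ℕ):ℝ) * (n:ℝ)^s ≤ ((n.choose s : ℕ):ℝ) * (m:ℝ)^s := by
      have := (Nat.cast_le (α := ℝ)).mpr (choose_mul_pow_le m n s hmn)
      push_cast at this
      linarith
    have h2 : ((n.choose s : ℕ):ℝ) * (m:ℝ)^s ≤ (n.choose s : ℕ) * (x₀^s * (n:ℝ)^s) := by
      have : (m:ℝ)^s ≤ (x₀ * n)^s := by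
        apply pow_le_pow_left₀ (by positivity) hm
      rw [mul_pow] at this
      exact mul_le_mul_of_nonneg_left this (by positivity)
    have hns : (0:ℝ) < (n:ℝ)^s := by positivity
    rw [← mul_le_mul_iff_of_pos_right hns]
    calc ((m.choose s : ℕ):ℝ) * (n:ℝ)^s ≤ (n.choose s : ℕ) * (x₀^s * (n:ℝ)^s) :=
          le_trans h1 h2
      _ = x₀^s * (n.choose s : ℕ) * (n:ℝ)^s := by ring
  have step2 : ((n.choose s : ℕ):ℝ) * (P:ℝ)^s ≤ y₀^(r-s) * ((n.choose r * P^r : ℕ):ℝ) := by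
    have h1 : ((n.choose s : ℕ):ℝ) * (P:ℝ)^s * (((n - r : ℕ):ℝ) * P)^(r-s)
        ≤ ((n.choose r * P^r : ℕ):ℝ) * (r:ℝ)^(r-s) := by
      have := (Nat.cast_le (α := ℝ)).mpr (choose_chain n r P (r-s) s (by omega))
      push_cast at this ⊢
      linarith
    have h2 : ((n.choose r * P^r : ℕ):ℝ) * (r:ℝ)^(r-s)
        ≤ ((n.choose r * P^r : ℕ):ℝ) * (y₀^(r-s) * (((n - r : ℕ):ℝ) * P)^(r-s)) := by
      apply mul_le_mul_of_nonneg_left _ (by positivity)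
      have : (r:ℝ)^(r-s) ≤ (y₀ * (((n - r : ℕ):ℝ) * P))^(r-s) := by
        apply pow_le_pow_left₀ (by positivity) hr
      rw [mul_pow] at this
      exact this
    have hDs : (0:ℝ) < (((n - r : ℕ):ℝ) * P)^(r-s) := by positivity
    rw [← mul_le_mul_iff_of_pos_right hDs]
    calc ((n.choose s : ℕ):ℝ) * (P:ℝ)^s * (((n - r : ℕ):ℝ) * P)^(r-s)
        ≤ ((n.choose r * P^r : ℕ):ℝ) * (y₀^(r-s) * (((n - r : ℕ):ℝ) * P)^(r-s)) :=
          le_trans h1 h2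
      _ = y₀^(r-s) * ((n.choose r * P^r : ℕ):ℝ) * (((n - r : ℕ):ℝ) * P)^(r-s) := by ring
  calc ((m.choose s * P^s : ℕ):ℝ) = ((m.choose s : ℕ):ℝ) * (P:ℝ)^s := by push_cast; ring
    _ ≤ (x₀^s * (n.choose s : ℕ)) * (P:ℝ)^s := by
        apply mul_le_mul_of_nonneg_right step1 (by positivity)
    _ = x₀^s * (((n.choose s : ℕ):ℝ) * (P:ℝ)^s) := by ring
    _ ≤ x₀^s * (y₀^(r-s) * ((n.choose r * P^r : ℕ):ℝ)) := by
        apply mul_le_mul_of_nonneg_left step2 (by positivity)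
    _ = x₀^s * y₀^(r-s) * ((n.choose r * P^r : ℕ):ℝ) := by ring

lemma scalar_bound (q : ℕ) (θ δ : ℝ) (hq : 2 ≤ q) (hθ0 : 0 < θ) (hθ1 : θ < 1)
    (hδ0 : 0 < δ) (hδ1 : δ < 1) :
    ∃ a : ℝ, 0 < a ∧ ∃ N : ℕ, 1 ≤ N ∧ ∀ n : ℕ, N ≤ n →
      ((q:ℝ))^(Nat.sqrt n) * (Nat.sqrt n) * ((⌊δ * (n:ℝ)⌋₊ : ℝ) + 1) * θ^(⌊δ * (n:ℝ)⌋₊)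
        ≤ (q:ℝ) ^ (-(a * (n:ℝ))) := by
  have hq1 : (1:ℝ) < q := by exact_mod_cast hq
  set L := Real.log q with hL
  have hL0 : 0 < L := Real.log_pos hq1
  have hlogθ : Real.log θ < 0 := Real.log_neg hθ0 hθ1
  set a := δ * (-Real.log θ) / (2 * L) with ha
  have ha0 : 0 < a := by
    apply div_pos (mul_pos hδ0 (by linarith)) (by linarith)
  set c₁ : ℝ := L + 3 with hc₁
  set c₂ : ℝ := 2 - Real.log θ with hc₂
  set c₃ : ℝ := δ * (-Real.log θ) / 2 with hc₃
  have hc₃0 : 0 < c₃ := by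
    apply div_pos (mul_pos hδ0 (by linarith)) (by norm_num)
  have hc₂0 : 0 < c₂ := by simp only [hc₂]; linarith
  have hc₁0 : 0 < c₁ := by simp only [hc₁]; linarith
  refine ⟨a, ha0, ⌈((c₁+c₂)/c₃ + 1)^2⌉₊ + 1, le_add_self, fun n hn => ?_⟩
  have hn1 : 1 ≤ n := le_trans le_add_self hn
  set ℓ := Nat.sqrt n with hℓ
  set r := ⌊δ * (n:ℝ)⌋₊ with hr
  have hℓ1 : 1 ≤ ℓ := Nat.sqrt_pos.mpr hn1
  have hn0R : (0:ℝ) < n := by exact_mod_cast hn1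
  have hsqn : (ℓ:ℝ) ≤ Real.sqrt n := by
    have h : (ℓ:ℝ)^2 ≤ (n:ℝ) := by exact_mod_cast Nat.sqrt_le' n
    calc (ℓ:ℝ) = Real.sqrt ((ℓ:ℝ)^2) := (Real.sqrt_sq (by positivity)).symm
      _ ≤ Real.sqrt n := Real.sqrt_le_sqrt h
  have hsq1 : 1 ≤ Real.sqrt n := le_trans (by exact_mod_cast hℓ1) hsqn
  have hsqN : (c₁+c₂)/c₃ + 1 ≤ Real.sqrt n := by
    have h1 : (((c₁+c₂)/c₃ + 1)^2 : ℝ) ≤ n := by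
      calc ((c₁+c₂)/c₃ + 1)^2 ≤ (⌈((c₁+c₂)/c₃ + 1)^2⌉₊ : ℝ) := Nat.le_ceil _
        _ ≤ n := by exact_mod_cast le_trans (Nat.le_succ _) hn
    calc (c₁+c₂)/c₃ + 1 = Real.sqrt (((c₁+c₂)/c₃ + 1)^2) :=
          (Real.sqrt_sq (by positivity)).symm
      _ ≤ Real.sqrt n := Real.sqrt_le_sqrt h1
  have hLHSpos : (0:ℝ) < (q:ℝ)^ℓ * ℓ * ((r:ℝ) + 1) * θ^r := by
    have : (0:ℝ) < ℓ := by exact_mod_cast hℓ1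
    positivity
  rw [Real.le_rpow_iff_log_le hLHSpos (by linarith)]
  -- expand the log
  have hlog : Real.log ((q:ℝ)^ℓ * ℓ * ((r:ℝ) + 1) * θ^r)
      = ℓ * L + Real.log ℓ + Real.log ((r:ℝ)+1) + r * Real.log θ := by
    rw [Real.log_mul (by positivity) (by positivity),
      Real.log_mul (by positivity) (by positivity),
      Real.log_mul (by positivity) (by positivity),
      Real.log_pow, Real.log_pow]
    try push_cast
    try ring
  rw [hlog]
  -- individual bounds
  have b1 : Real.log ℓ ≤ Real.sqrt n := by
    calc Real.log ℓ ≤ (ℓ:ℝ) - 1 := Real.log_le_sub_one_of_pos (by exact_mod_cast hℓ1)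
      _ ≤ Real.sqrt n := by linarith
  have b2 : (ℓ:ℝ) * L ≤ Real.sqrt n * L := by
    apply mul_le_mul_of_nonneg_right hsqn hL0.le
  have b3 : Real.log ((r:ℝ)+1) ≤ 2 * Real.sqrt n + 2 := by
    have hr1 : (0:ℝ) < (r:ℝ) + 1 := by positivity
    have e1 : Real.log ((r:ℝ)+1) = 2 * Real.log (Real.sqrt ((r:ℝ)+1)) := by
      rw [Real.log_sqrt (by positivity)]; ring
    have e2 : Real.log (Real.sqrt ((r:ℝ)+1)) ≤ Real.sqrt ((r:ℝ)+1) - 1 :=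
      Real.log_le_sub_one_of_pos (Real.sqrt_pos.mpr hr1)
    have e3 : Real.sqrt ((r:ℝ)+1) ≤ Real.sqrt ((n:ℝ)+1) := by
      apply Real.sqrt_le_sqrt
      have : (r:ℝ) ≤ δ * n := Nat.floor_le (by positivity)
      nlinarith
    have e4 : Real.sqrt ((n:ℝ)+1) ≤ Real.sqrt n + 1 := by
      have hsq := Real.sq_sqrt hn0R.le
      have h5 : ((n:ℝ)+1) ≤ (Real.sqrt n + 1)^2 := by nlinarith [Real.sqrt_nonneg (n:ℝ)]
      calc Real.sqrt ((n:ℝ)+1) ≤ Real.sqrt ((Real.sqrt n + 1)^2) := Real.sqrt_le_sqrt h5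
        _ = Real.sqrt n + 1 := Real.sqrt_sq (by positivity)
    linarith
  have b4 : (r:ℝ) * Real.log θ ≤ (δ * n - 1) * Real.log θ := by
    apply mul_le_mul_of_nonpos_right _ hlogθ.le
    exact (Nat.sub_one_lt_floor (δ * n)).le
  -- final arithmetic
  have key : c₁ * Real.sqrt n + c₂ ≤ c₃ * n := by
    have h1 : c₁ + c₂ ≤ c₃ * Real.sqrt n := by
      calc c₁ + c₂ = c₃ * ((c₁+c₂)/c₃) := by field_simp
        _ ≤ c₃ * (Real.sqrt n) := by
            apply mul_le_mul_of_nonneg_left _ hc₃0.le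
            linarith
    calc c₁ * Real.sqrt n + c₂ ≤ c₁ * Real.sqrt n + c₂ * Real.sqrt n := by nlinarith
      _ = (c₁ + c₂) * Real.sqrt n := by ring
      _ ≤ (c₃ * Real.sqrt n) * Real.sqrt n := mul_le_mul_of_nonneg_right h1 (by positivity)
      _ = c₃ * n := by rw [mul_assoc, Real.mul_self_sqrt hn0R.le]
  have hrhs : -(a * n) * L = δ * Real.log θ / 2 * n := by
    simp only [ha]
    field_simp
  rw [hrhs]
  have expand : Real.sqrt n * L + Real.sqrt n + (2 * Real.sqrt n + 2) + (δ * n - 1) * Real.log θ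
      ≤ δ * Real.log θ / 2 * n := by
    have : c₁ * Real.sqrt n + c₂ ≤ c₃ * n := key
    simp only [hc₁, hc₂, hc₃] at this
    nlinarith
  linarith

end aux

/-- For a prime power `q` (realized as the cardinality of a finite field `F`)
and a constant `δ ∈ (0, 1 - 1/q²)`, there is a constant `a_δ > 0` such that for all
sufficiently large `n`, with `d - 1 = ⌊δn⌋` and `ℓ = ⌊√n⌋`: for every `T ⊆ {1,…,n}` with
`|T| ≥ (2δ/3)n`, if `u_1, …, u_ℓ` are independent uniform vectors of `B_q^S(2n, d-1)`, then the
probability that the restrictions `u_1|_T, …, u_ℓ|_T` are linearly dependent is at most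
`q^{-a_δ n}` (expressed by counting `ℓ`-tuples of ball elements). -/
theorem symp_restricted_linear_dependence_bound
    (q : ℕ) (F : Type) [Field F] [Fintype F] [DecidableEq F] (hF : Fintype.card F = q)
    (δ : ℝ) (hδ0 : 0 < δ) (hδ : δ < 1 - 1 / (q : ℝ) ^ 2) :
    ∃ a : ℝ, 0 < a ∧ ∃ N : ℕ, ∀ n : ℕ, N ≤ n →
      ∀ T : Finset (Fin n), 2 * δ / 3 * (n : ℝ) ≤ (T.card : ℝ) →
        (((Finset.univ : Finset (Fin (Nat.sqrt n) → Fin n → F × F)).filter fun u =>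
            (∀ j, u j ∈ sympBall F n ⌊δ * (n : ℝ)⌋₊) ∧
              ¬ LinearIndependent F
                  (fun j : Fin (Nat.sqrt n) => fun i : {i // i ∈ T} => u j i.1)).card : ℝ) ≤
          (q : ℝ) ^ (-(a * (n : ℝ))) *
            ((sympBall F n ⌊δ * (n : ℝ)⌋₊).card : ℝ) ^ (Nat.sqrt n) := by
  classical
  have hq2 : 2 ≤ q := by
    have h := Fintype.one_lt_card (α := F)
    rw [hF] at h
    omega
  have hq2R : (2:ℝ) ≤ (q:ℝ) := by exact_mod_cast hq2
  set c : ℝ := (q:ℝ)^2 with hc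
  have hc4 : (4:ℝ) ≤ c := by rw [hc]; nlinarith
  have hc0 : (0:ℝ) < c := by linarith
  have hδ1 : δ < 1 := by
    have h0 : 0 < 1/c := by positivity
    calc δ < 1 - 1/c := hδ
      _ < 1 := by linarith
  set x₀ : ℝ := 1 - 2*δ/3 with hx₀
  set y₀ : ℝ := δ / ((1-δ) * (c - 1)) with hy₀
  set θ : ℝ := max x₀ y₀ with hθ
  have hx₀0 : 0 < x₀ := by rw [hx₀]; linarith
  have hx₀1 : x₀ < 1 := by rw [hx₀]; linarith
  have hy₀0 : 0 ≤ y₀ := by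
    rw [hy₀]
    apply div_nonneg hδ0.le
    nlinarith
  have hy₀1 : y₀ < 1 := by
    rw [hy₀, div_lt_one (by nlinarith)]
    have h1 : δ * c < c - 1 := by
      have h2 : (1 - 1/c) * c = c - 1 := by field_simp
      calc δ * c < (1 - 1/c) * c := mul_lt_mul_of_pos_right hδ hc0
        _ = c - 1 := h2
    nlinarith
  have hθ0 : 0 < θ := lt_of_lt_of_le hx₀0 (le_max_left _ _)
  have hθ1 : θ < 1 := max_lt hx₀1 hy₀1
  obtain ⟨a, ha0, N, hN1, hscalar⟩ := scalar_bound q θ δ hq2 hθ0 hθ1 hδ0 hδ1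
  refine ⟨a, ha0, N, fun n hn T hT => ?_⟩
  have hn1 : 1 ≤ n := le_trans hN1 hn
  set ℓ := Nat.sqrt n with hℓdef
  set r := ⌊δ * (n:ℝ)⌋₊ with hrdef
  have hℓ1 : 1 ≤ ℓ := Nat.sqrt_pos.mpr hn1
  have hn0R : (0:ℝ) < n := by exact_mod_cast hn1
  have hrδ : (r:ℝ) ≤ δ * n := Nat.floor_le (by positivity)
  have hrn : r < n := by
    by_contra h
    push_neg at h
    have h2 : (n:ℝ) ≤ (r:ℝ) := by exact_mod_cast h
    nlinarith
  set P := Fintype.card (F × F) - 1 with hPdef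
  have hQ : Fintype.card (F × F) = q * q := by rw [Fintype.card_prod, hF]
  have h1qq : 1 ≤ q * q := by nlinarith
  have hPR : (P:ℝ) = c - 1 := by
    rw [hPdef, hQ, Nat.cast_sub h1qq, hc]
    push_cast
    ring
  have hP1 : 1 ≤ P := by
    rw [hPdef, hQ]
    have : 4 ≤ q * q := Nat.mul_le_mul hq2 hq2
    omega
  set m := Tᶜ.card with hmdef
  have hmn : m ≤ n := by
    rw [hmdef]
    calc Tᶜ.card ≤ Fintype.card (Fin n) := Finset.card_le_univ _
      _ = n := Fintype.card_fin n
  have hTn : T.card ≤ n := le_trans (Finset.card_le_univ T) (le_of_eq (Fintype.card_fin n))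
  have hmR : (m:ℝ) = (n:ℝ) - T.card := by
    rw [hmdef, Finset.card_compl, Fintype.card_fin, Nat.cast_sub hTn]
  have hm : (m:ℝ) ≤ x₀ * n := by
    rw [hmR, hx₀]
    nlinarith [hT]
  have hrb : (r:ℝ) ≤ y₀ * (((n - r : ℕ):ℝ) * (P:ℝ)) := by
    have hnr : ((n - r : ℕ):ℝ) = (n:ℝ) - r := by rw [Nat.cast_sub hrn.le]
    rw [hnr, hPR, hy₀, div_mul_eq_mul_div, le_div_iff₀ (by nlinarith)]
    nlinarith
  set B := sympBall F n r with hBdef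
  set Bc := (univ : Finset (Fin n → F × F)).filter fun x =>
      (∀ i ∈ T, x i = 0) ∧ sympWt x ≤ r with hBcdef
  have hball : (n.choose r * P^r : ℕ) ≤ B.card := ball_lower (V := F × F) r
  have hcomp : Bc.card ≤ ∑ s ∈ Finset.range (r+1), m.choose s * P^s :=
    comp_upper (V := F × F) T r
  have hBcR : (Bc.card : ℝ) ≤ ((r:ℝ)+1) * θ^r * (B.card:ℝ) := by
    have sum_bound : ∀ s ∈ Finset.range (r+1),
        ((m.choose s * P^s : ℕ):ℝ) ≤ θ^r * ((n.choose r * P^r : ℕ):ℝ) := by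
      intro s hs
      rw [Finset.mem_range] at hs
      have hsr : s ≤ r := by omega
      calc ((m.choose s * P^s : ℕ):ℝ) ≤ x₀^s * y₀^(r-s) * ((n.choose r * P^r : ℕ):ℝ) :=
            term_bound m n r s P x₀ y₀ hsr hrn hmn hP1 hx₀0.le hy₀0 hm hrb
        _ ≤ θ^s * θ^(r-s) * ((n.choose r * P^r : ℕ):ℝ) := by
            apply mul_le_mul_of_nonneg_right _ (by positivity)
            apply mul_le_mul (pow_le_pow_left₀ hx₀0.le (le_max_left _ _) s)
              (pow_le_pow_left₀ hy₀0 (le_max_right _ _) _) (by positivity) (by positivity)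
        _ = θ^r * ((n.choose r * P^r : ℕ):ℝ) := by
            rw [← pow_add]
            congr 2
            omega
    calc (Bc.card : ℝ) ≤ ((∑ s ∈ Finset.range (r+1), m.choose s * P^s : ℕ):ℝ) := by
          exact_mod_cast hcomp
      _ = ∑ s ∈ Finset.range (r+1), ((m.choose s * P^s : ℕ):ℝ) := by push_cast; rfl
      _ ≤ ∑ _s ∈ Finset.range (r+1), θ^r * ((n.choose r * P^r : ℕ):ℝ) :=
          Finset.sum_le_sum sum_bound
      _ = ((r:ℝ)+1) * (θ^r * ((n.choose r * P^r : ℕ):ℝ)) := by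
          rw [Finset.sum_const, Finset.card_range, nsmul_eq_mul]
          push_cast
          ring
      _ ≤ ((r:ℝ)+1) * (θ^r * (B.card:ℝ)) := by
          apply mul_le_mul_of_nonneg_left _ (by positivity)
          apply mul_le_mul_of_nonneg_left _ (by positivity)
          exact_mod_cast hball
      _ = ((r:ℝ)+1) * θ^r * (B.card:ℝ) := by ring
  have hcount := union_bound (F := F) (n := n) (ℓ := ℓ) (r := r) T
  calc (((univ : Finset (Fin ℓ → Fin n → F × F)).filter fun u =>
          (∀ j, u j ∈ B) ∧
            ¬ LinearIndependent F
                (fun j : Fin ℓ => fun i : {i // i ∈ T} => u j i.1)).card : ℝ)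
      ≤ (((Fintype.card F ^ ℓ * ℓ) * (Bc.card * B.card ^ (ℓ-1)) : ℕ) : ℝ) := by
        exact_mod_cast hcount
    _ = (q:ℝ)^ℓ * ℓ * ((Bc.card:ℝ) * (B.card:ℝ)^(ℓ-1)) := by
        rw [hF]
        push_cast
        ring
    _ ≤ (q:ℝ)^ℓ * ℓ * ((((r:ℝ)+1) * θ^r * (B.card:ℝ)) * (B.card:ℝ)^(ℓ-1)) := by
        have hl0 : (0:ℝ) ≤ (q:ℝ)^ℓ * ℓ := by positivity
        apply mul_le_mul_of_nonneg_left _ hl0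
        apply mul_le_mul_of_nonneg_right hBcR (by positivity)
    _ = ((q:ℝ)^ℓ * ℓ * ((r:ℝ)+1) * θ^r) * ((B.card:ℝ) * (B.card:ℝ)^(ℓ-1)) := by ring
    _ = ((q:ℝ)^ℓ * ℓ * ((r:ℝ)+1) * θ^r) * (B.card:ℝ)^ℓ := by
        rw [mul_pow_sub_one (Nat.one_le_iff_ne_zero.mp hℓ1)]
    _ ≤ (q:ℝ)^(-(a * (n:ℝ))) * (B.card:ℝ)^ℓ := by
        apply mul_le_mul_of_nonneg_right _ (by positivity)
        exact hscalar n hn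
end
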